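/- Let a > 0 and b, c real. The function ψ(x) = exp(-(√a/6)x⁶ - (b/(8√a))x⁴ + ((b²-4ac)/(16a^{3/2}))x²) satisfies -ψ''(x) + (ax¹⁰ + bx⁸ + cx⁶ + dx⁴ + ex²)ψ(x) = E₀ψ(x) for all real x, where E₀ = (4ac - b²)/(8a^{3/2}), d = -(40a^{5/2} + b³ - 4abc)/(8a²), and e = -(96a^{5/2}b - b⁴ + 8ab²c - 16a²c²)/(64a³). -/

import Mathlib

theorem decatic_ground_state
    (a b c E₀ d e : ℝ) (ha : 0 < a)
    (hE : E₀ = (4 * a * c - b ^ 2) / (8 * (Real.sqrt a) ^ 3))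
    (hd : d = -(40 * (Real.sqrt a) ^ 5 + b ^ 3 - 4 * a * b * c) / (8 * a ^ 2))
    (he : e = -(96 * (Real.sqrt a) ^ 5 * b - b ^ 4 + 8 * a * b ^ 2 * c - 16 * a ^ 2 * c ^ 2)
          / (64 * a ^ 3))
    (ψ : ℝ → ℝ)
    (hψ : ψ = fun x => Real.exp (-(Real.sqrt a / 6) * x ^ 6 - (b / (8 * Real.sqrt a)) * x ^ 4
          + ((b ^ 2 - 4 * a * c) / (16 * (Real.sqrt a) ^ 3)) * x ^ 2)) :
    ∀ x : ℝ, -(deriv (deriv ψ) x)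
      + (a * x ^ 10 + b * x ^ 8 + c * x ^ 6 + d * x ^ 4 + e * x ^ 2) * ψ x
      = E₀ * ψ x := by
  intro x
  set s := Real.sqrt a with hsdef
  have hs0 : 0 < s := Real.sqrt_pos.mpr ha
  have hs2 : s ^ 2 = a := Real.sq_sqrt ha.le
  set A : ℝ := -(s / 6) with hA
  set B : ℝ := -(b / (8 * s)) with hB
  set C : ℝ := (b ^ 2 - 4 * a * c) / (16 * s ^ 3) with hC
  have hψ' : ψ = fun x => Real.exp (A * x ^ 6 + B * x ^ 4 + C * x ^ 2) := by
    rw [hψ]; funext y; rw [hB]; ring_nf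
  -- derivative of the exponent
  have hf : ∀ y : ℝ, HasDerivAt (fun y => A * y ^ 6 + B * y ^ 4 + C * y ^ 2)
      (A * (6 * y ^ 5) + B * (4 * y ^ 3) + C * (2 * y)) y := by
    intro y
    have h6 : HasDerivAt (fun y : ℝ => y ^ 6) (6 * y ^ 5) y := by
      simpa using hasDerivAt_pow 6 y
    have h4 : HasDerivAt (fun y : ℝ => y ^ 4) (4 * y ^ 3) y := by
      simpa using hasDerivAt_pow 4 y
    have h2 : HasDerivAt (fun y : ℝ => y ^ 2) (2 * y) y := by
      simpa using hasDerivAt_pow 2 y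
    exact ((h6.const_mul A).add (h4.const_mul B)).add (h2.const_mul C)
  have hψd : ∀ y : ℝ, HasDerivAt ψ
      ((A * (6 * y ^ 5) + B * (4 * y ^ 3) + C * (2 * y)) * ψ y) y := by
    intro y
    rw [hψ']
    simpa [mul_comm] using (hf y).exp
  have hderiv1 : deriv ψ = fun y =>
      (A * (6 * y ^ 5) + B * (4 * y ^ 3) + C * (2 * y)) * ψ y := by
    funext y; exact (hψd y).deriv
  have hp : ∀ y : ℝ, HasDerivAt (fun y : ℝ => A * (6 * y ^ 5) + B * (4 * y ^ 3) + C * (2 * y))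
      (A * (30 * y ^ 4) + B * (12 * y ^ 2) + C * 2) y := by
    intro y
    have h5 : HasDerivAt (fun y : ℝ => y ^ 5) (5 * y ^ 4) y := by
      simpa using hasDerivAt_pow 5 y
    have h3 : HasDerivAt (fun y : ℝ => y ^ 3) (3 * y ^ 2) y := by
      simpa using hasDerivAt_pow 3 y
    have h1 : HasDerivAt (fun y : ℝ => y) 1 y := hasDerivAt_id y
    have := (((h5.const_mul (6:ℝ)).const_mul A).add
      ((h3.const_mul (4:ℝ)).const_mul B)).add ((h1.const_mul (2:ℝ)).const_mul C)
    exact this.congr_deriv (by ring)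
  have hderiv2 : deriv (deriv ψ) x =
      (A * (30 * x ^ 4) + B * (12 * x ^ 2) + C * 2) * ψ x
      + (A * (6 * x ^ 5) + B * (4 * x ^ 3) + C * (2 * x)) ^ 2 * ψ x := by
    rw [hderiv1]
    have := ((hp x).mul (hψd x)).deriv
    refine this.trans ?_; ring
  rw [hderiv2]
  have key : -((A * (30 * x ^ 4) + B * (12 * x ^ 2) + C * 2)
      + (A * (6 * x ^ 5) + B * (4 * x ^ 3) + C * (2 * x)) ^ 2)
      + (a * x ^ 10 + b * x ^ 8 + c * x ^ 6 + d * x ^ 4 + e * x ^ 2) = E₀ := by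
    rw [hE, hd, he, hA, hB, hC, ← hs2]
    have hsne : s ≠ 0 := hs0.ne'
    field_simp
    ring
  calc -((A * (30 * x ^ 4) + B * (12 * x ^ 2) + C * 2) * ψ x
      + (A * (6 * x ^ 5) + B * (4 * x ^ 3) + C * (2 * x)) ^ 2 * ψ x)
      + (a * x ^ 10 + b * x ^ 8 + c * x ^ 6 + d * x ^ 4 + e * x ^ 2) * ψ x
      = (-((A * (30 * x ^ 4) + B * (12 * x ^ 2) + C * 2)
        + (A * (6 * x ^ 5) + B * (4 * x ^ 3) + C * (2 * x)) ^ 2)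
        + (a * x ^ 10 + b * x ^ 8 + c * x ^ 6 + d * x ^ 4 + e * x ^ 2)) * ψ x := by ring
    _ = E₀ * ψ x := by rw [key]
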